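/- Let p, q be idempotents in a ring R with p − q Drazin invertible, and H := (p−q)^D(p−q). Then qHq = qH = Hq = HqH. -/

import Mathlib

/-- `b` is the Drazin inverse of `a`. -/
def IsDrazinInverse {R : Type*} [Ring R] (a b : R) : Prop :=
  a * b = b * a ∧ b * a * b = b ∧ IsNilpotent (a - a * a * b)

lemma drazin_comm {R : Type*} [Ring R] {c b x : R} (hd : IsDrazinInverse c b)
    (hx : x * c = c * x) : x * b = b * x := by
  obtain ⟨h1, h2, k, hk⟩ := hd
  obtain ⟨e, hedef⟩ : ∃ e, e = c * b := ⟨_, rfl⟩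
  have hcb : c * b = b * c := h1
  have heb : e * b = b := by rw [hedef, hcb]; exact h2
  have hee : e * e = e := by
    rw [hedef]
    calc c * b * (c * b) = c * (b * c * b) := by noncomm_ring
    _ = c * b := by rw [h2]
  have hce : c * e = e * c := by
    rw [hedef]
    calc c * (c * b) = c * (b * c) := by rw [hcb]
    _ = c * b * c := by rw [mul_assoc]
  have hcu : Commute c (1 - e) := by
    unfold Commute SemiconjBy
    rw [mul_sub, sub_mul, mul_one, one_mul, hce]
  have hcmu : ∀ m : ℕ, (c - c * c * b) ^ (m + 1) = c ^ (m + 1) * (1 - e) := by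
    intro m
    have hn : c - c * c * b = c * (1 - e) := by rw [hedef]; noncomm_ring
    have huu : IsIdempotentElem (1 - e) := by
      unfold IsIdempotentElem
      simp only [mul_sub, sub_mul, mul_one, one_mul, hee]; abel
    rw [hn, hcu.mul_pow, huu.pow_succ_eq]
  have hck : c ^ (k + 1) * (1 - e) = 0 := by
    have h : (c - c * c * b) ^ (k + 1) = 0 := by rw [pow_succ, hk, zero_mul]
    rw [← hcmu, h]
  have hck' : (1 - e) * c ^ (k + 1) = 0 := by
    rw [← (hcu.pow_left (k+1)).eq, hck]
  have hebm : ∀ m : ℕ, e * b ^ (m + 1) = b ^ (m + 1) := by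
    intro m; induction m with
    | zero => simpa using heb
    | succ n ih => rw [pow_succ, ← mul_assoc, ih]
  have hecb : ∀ m : ℕ, c ^ (m + 1) * b ^ (m + 1) = e := by
    intro m; induction m with
    | zero => simpa using hedef.symm
    | succ n ih =>
      calc c ^ (n+2) * b ^ (n+2) = c ^ (n+1) * (c * b * b ^ (n+1)) := by
            rw [pow_succ c (n+1), pow_succ' b (n+1)]; noncomm_ring
      _ = c ^ (n+1) * (e * b ^ (n+1)) := by rw [← hedef]
      _ = c ^ (n+1) * b ^ (n+1) := by rw [hebm]
      _ = e := ih
  have hbc : b ^ (k+1) * c ^ (k+1) = e := by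
    have hcom : Commute (b ^ (k+1)) (c ^ (k+1)) :=
      Commute.pow_pow (show Commute b c from hcb.symm) _ _
    rw [hcom.eq]; exact hecb k
  have hxc : x * c ^ (k+1) = c ^ (k+1) * x := (show Commute x c from hx).pow_right (k+1)
  have A : x * e = e * (x * e) := by
    have h0 : (1 - e) * (x * e) = 0 := by
      calc (1 - e) * (x * e) = (1 - e) * (x * (c ^ (k+1) * b ^ (k+1))) := by rw [hecb]
      _ = (1 - e) * (x * c ^ (k+1) * b ^ (k+1)) := by rw [mul_assoc]
      _ = (1 - e) * (c ^ (k+1) * x * b ^ (k+1)) := by rw [hxc]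
      _ = ((1 - e) * c ^ (k+1)) * (x * b ^ (k+1)) := by noncomm_ring
      _ = 0 := by rw [hck']; simp
    have h2' : (x * e) - e * (x * e) = 0 := by rw [← h0]; noncomm_ring
    linear_combination (norm := noncomm_ring) h2'
  have B : e * x = (e * x) * e := by
    have h0 : (e * x) * (1 - e) = 0 := by
      calc (e * x) * (1 - e) = (b ^ (k+1) * c ^ (k+1)) * x * (1 - e) := by rw [hbc]
      _ = b ^ (k+1) * (c ^ (k+1) * x) * (1 - e) := by rw [mul_assoc (b ^ (k+1))]
      _ = b ^ (k+1) * (x * c ^ (k+1)) * (1 - e) := by rw [hxc]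
      _ = (b ^ (k+1) * x) * (c ^ (k+1) * (1 - e)) := by noncomm_ring
      _ = 0 := by rw [hck]; simp
    have h2' : e * x - (e * x) * e = 0 := by rw [← h0]; noncomm_ring
    linear_combination (norm := noncomm_ring) h2'
  have hxe : x * e = e * x := by rw [A, ← mul_assoc, ← B]
  calc x * b = x * (e * b) := by rw [heb]
  _ = (x * e) * b := by rw [mul_assoc]
  _ = (e * x) * b := by rw [hxe]
  _ = b * c * x * b := by rw [hedef, hcb]
  _ = b * (x * c) * b := by rw [mul_assoc b c x, ← hx]
  _ = b * x * (c * b) := by noncomm_ring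
  _ = b * x * e := by rw [← hedef]
  _ = b * (x * e) := by rw [mul_assoc]
  _ = b * (e * x) := by rw [hxe]
  _ = (b * e) * x := by rw [mul_assoc]
  _ = b * x := by rw [hedef, ← mul_assoc, h2]

theorem stmt5 {R : Type*} [Ring R] (p q d : R) (hp : p * p = p) (hq : q * q = q)
    (hd : IsDrazinInverse (p - q) d) :
    q * (d * (p - q)) * q = q * (d * (p - q)) ∧
      q * (d * (p - q)) = (d * (p - q)) * q ∧
      (d * (p - q)) * q = (d * (p - q)) * q * (d * (p - q)) := by
  obtain ⟨h1, h2, h3⟩ := hd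
  obtain ⟨a, ha⟩ : ∃ a, a = p - q := ⟨_, rfl⟩
  rw [← ha] at h1 h2 h3 ⊢
  have had : a * d = d * a := h1
  have cad : Commute a d := had
  -- q commutes with a^2
  have e1 : a * a = p - p * q - q * p + q := by
    rw [ha]; simp only [mul_sub, sub_mul, hp, hq]; abel
  have hq2 : q * (a * a) = (a * a) * q := by
    have l : q * (a * a) = q - q * p * q := by
      rw [e1]; simp only [mul_sub, mul_add, ← mul_assoc, hq]; abel
    have r : (a * a) * q = q - q * p * q := by
      rw [e1]; simp only [sub_mul, add_mul, mul_assoc, hq]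
      rw [← mul_assoc q p q]; abel
    rw [l, r]
  -- (d*d) is a Drazin inverse of (a*a)
  have hDI : IsDrazinInverse (a * a) (d * d) := by
    refine ⟨?_, ?_, ?_⟩
    · exact ((cad.mul_right cad).mul_left (cad.mul_right cad)).eq
    · calc d * d * (a * a) * (d * d) = d * (d * a) * a * d * d := by noncomm_ring
      _ = d * (a * d) * a * d * d := by rw [had]
      _ = (d * a * d) * (a * d) * d := by noncomm_ring
      _ = d * (a * d) * d := by rw [h2]
      _ = (d * a * d) * d := by noncomm_ring
      _ = d * d := by rw [h2]
    · have caad : Commute a (a * a * d) :=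
        ((Commute.refl a).mul_right (Commute.refl a)).mul_right cad
      have cda2 : Commute d (a * a) := cad.symm.mul_right cad.symm
      have key : a * a - a * a * (a * a) * (d * d) = (a - a * a * d) * (a + a * a * d) := by
        have step1 : (a - a * a * d) * (a + a * a * d)
            = a * a + a * (a * a * d) - (a * a * d) * a - (a * a * d) * (a * a * d) := by
          noncomm_ring
        have step2 : (a * a * d) * (a * a * d) = a * a * (a * a) * (d * d) := by
          calc (a * a * d) * (a * a * d) = a * a * (d * (a * a)) * d := by noncomm_ring
          _ = a * a * ((a * a) * d) * d := by rw [cda2.eq]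
          _ = a * a * (a * a) * (d * d) := by noncomm_ring
        rw [step1, ← caad.eq, step2]
        abel
      rw [key]
      have cnm : Commute (a - a * a * d) (a + a * a * d) :=
        ((Commute.refl a).add_right caad).sub_left ((caad.symm).add_right (Commute.refl _))
      exact cnm.isNilpotent_mul_right h3
  -- q commutes with d*d, hence with H = d*a = (d*d)*(a*a)
  have hqdd : q * (d * d) = (d * d) * q := drazin_comm hDI hq2
  have hH : d * a = (d * d) * (a * a) := by
    calc d * a = (d * a * d) * a := by rw [h2]
    _ = d * (a * d) * a := by rw [mul_assoc d a d]
    _ = d * (d * a) * a := by rw [had]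
    _ = (d * d) * (a * a) := by noncomm_ring
  have hqH : q * (d * a) = (d * a) * q := by
    rw [hH]
    calc q * ((d * d) * (a * a)) = (q * (d * d)) * (a * a) := by noncomm_ring
    _ = ((d * d) * q) * (a * a) := by rw [hqdd]
    _ = (d * d) * (q * (a * a)) := by noncomm_ring
    _ = (d * d) * ((a * a) * q) := by rw [hq2]
    _ = (d * d) * (a * a) * q := by noncomm_ring
  have hHH : (d * a) * (d * a) = d * a := by
    calc (d * a) * (d * a) = d * (a * d) * a := by noncomm_ring
    _ = d * (d * a) * a := by rw [had]
    _ = (d * d) * (a * a) := by noncomm_ring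
    _ = d * a := hH.symm
  refine ⟨?_, hqH, ?_⟩
  · calc q * (d * a) * q = (d * a) * q * q := by rw [hqH]
    _ = (d * a) * (q * q) := by noncomm_ring
    _ = (d * a) * q := by rw [hq]
    _ = q * (d * a) := by rw [hqH]
  · calc (d * a) * q = q * (d * a) := by rw [hqH]
    _ = q * ((d * a) * (d * a)) := by rw [hHH]
    _ = (q * (d * a)) * (d * a) := by noncomm_ring
    _ = (d * a) * q * (d * a) := by rw [hqH]
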